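/- (Sign-rank upper bound for Gap Hamming Distance.) For all n, k ∈ ℕ with 2k < n, there exist maps u, v : (Fin n → Bool) → EuclideanSpace ℝ (Fin (2k+1)) such that for all x, y ∈ {0,1}^n: if hammingDist x y ≤ k then ⟪u x, v y⟫ > 0, and if hammingDist x y ≥ n − k then ⟪u x, v y⟫ < 0. In particular srank(GHD_k^n) ≤ 2k + 1. -/

import Mathlib

open scoped RealInnerProductSpace

/-- Sign-rank upper bound for Gap Hamming Distance: `srank(GHD_k^n) ≤ 2k + 1`,
witnessed by explicit vectors in `ℝ^{2k+1}`. -/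
theorem ghd_srank_upper (n k : ℕ) (h : 2 * k < n) :
    ∃ (u v : (Fin n → Bool) → EuclideanSpace ℝ (Fin (2 * k + 1))),
      ∀ x y : Fin n → Bool,
        (hammingDist x y ≤ k → 0 < ⟪u x, v y⟫) ∧
        (n - k ≤ hammingDist x y → ⟪u x, v y⟫ < 0) := by
  have hle : 2 * k + 1 ≤ n := h
  set u : (Fin n → Bool) → EuclideanSpace ℝ (Fin (2 * k + 1)) :=
    fun x => WithLp.toLp 2 (fun i => if x (Fin.castLE hle i) then (1:ℝ) else -1) with hu
  refine ⟨u, u, ?_⟩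
  intro x y
  set A : Finset (Fin (2*k+1)) :=
    {i | x (Fin.castLE hle i) = y (Fin.castLE hle i)} with hA
  set B : Finset (Fin (2*k+1)) :=
    {i | x (Fin.castLE hle i) ≠ y (Fin.castLE hle i)} with hB
  have hAB : A.card + B.card = 2*k+1 := by
    rw [hA, hB]
    simpa using Finset.card_filter_add_card_filter_not
      (s := Finset.univ) (p := fun i => x (Fin.castLE hle i) = y (Fin.castLE hle i))
  have hinner : ⟪u x, u y⟫ = (A.card : ℝ) - (B.card : ℝ) := by
    rw [hu, PiLp.inner_apply]
    have : ∀ i : Fin (2*k+1),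
        (if x (Fin.castLE hle i) then (1:ℝ) else -1) * (if y (Fin.castLE hle i) then (1:ℝ) else -1)
        = if x (Fin.castLE hle i) = y (Fin.castLE hle i) then (1:ℝ) else -1 := by
      intro i
      cases x (Fin.castLE hle i) <;> cases y (Fin.castLE hle i) <;> norm_num
    simp only [PiLp.toLp_apply, RCLike.inner_apply, conj_trivial, fun i => (mul_comm _ _).trans (this i)]
    rw [Finset.sum_ite, Finset.sum_const, Finset.sum_const]
    simp [hA, hB, sub_eq_add_neg]
  rw [hinner]
  constructor
  · intro hd
    have hBle : B.card ≤ k := by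
      calc B.card ≤ hammingDist x y := by
            apply Finset.card_le_card_of_injOn (Fin.castLE hle)
            · intro i hi
              rw [hB, Finset.mem_coe, Finset.mem_filter] at hi
              simpa [hammingDist] using hi.2
            · exact fun a _ b _ hab => Fin.castLE_injective hle hab
        _ ≤ k := hd
    have : B.card < A.card := by omega
    have := sub_pos.mpr (Nat.cast_lt (α := ℝ) |>.mpr this)
    linarith
  · intro hd
    have hdn : hammingDist x y ≤ n := by simpa using hammingDist_le_card_fintype (x := x) (y := y)
    have hGle : ({i | x i = y i} : Finset (Fin n)).card ≤ k := by
      have := Finset.card_filter_add_card_filter_not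
        (s := Finset.univ) (p := fun i : Fin n => x i = y i)
      simp only [Finset.card_univ, Fintype.card_fin] at this
      have hG : ({i | x i = y i} : Finset (Fin n)).card + hammingDist x y = n := by
        simpa [hammingDist] using this
      omega
    have hAle : A.card ≤ k := by
      calc A.card ≤ ({i | x i = y i} : Finset (Fin n)).card := by
            apply Finset.card_le_card_of_injOn (Fin.castLE hle)
            · intro i hi
              simpa using (by simpa [hA] using hi : x (Fin.castLE hle i) = y (Fin.castLE hle i))
            · exact fun a _ b _ hab => Fin.castLE_injective hle hab
        _ ≤ k := hGle
    have : A.card < B.card := by omega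
    have := sub_neg.mpr (Nat.cast_lt (α := ℝ) |>.mpr this)
    linarith
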